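/- For the degree-3 tetrahedral Painlevé VI solution given parametrically by y = (s−1)(s+2)/(s(s+1)) and t = (s−1)²(s+2)/((s+1)²(s−2)), the function y(t) satisfies the Painlevé VI equation with parameters α = (θ₄−1)²/2, β = −θ₁²/2, γ = θ₃²/2, δ = (1−θ₂²)/2 where (θ₁,θ₂,θ₃,θ₄) = (2/3, 1/3, 1/3, 2/3). -/

import Mathlib

/-- The Painlevé VI equation, as a relation between `t`, `y = y(t)`, `yp = y'(t)` and
`ypp = y''(t)`, with parameters `α β γ δ`. -/
def PVI (α β γ δ t y yp ypp : ℝ) : Prop :=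
  ypp = (1/2) * (1/y + 1/(y-1) + 1/(y-t)) * yp^2
        - (1/t + 1/(t-1) + 1/(y-t)) * yp
        + (y*(y-1)*(y-t) / (t^2*(t-1)^2)) *
            (α + β*t/y^2 + γ*(t-1)/(y-1)^2 + δ*t*(t-1)/(y-t)^2)

noncomputable section

private lemma hasDerivAt_Y {x : ℝ} (h0 : x ≠ 0) (h1 : x + 1 ≠ 0) :
    HasDerivAt (fun x : ℝ => (x-1)*(x+2) / (x*(x+1))) ((4*x+2)/(x*(x+1))^2) x := by
  have hnum : HasDerivAt (fun x : ℝ => (x-1)*(x+2)) (1*(x+2)+(x-1)*1) x :=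
    (((hasDerivAt_id x).sub_const 1).mul ((hasDerivAt_id x).add_const 2))
  have hden : HasDerivAt (fun x : ℝ => x*(x+1)) (1*(x+1)+x*1) x :=
    ((hasDerivAt_id x).mul ((hasDerivAt_id x).add_const 1))
  have h := hnum.fun_div hden (mul_ne_zero h0 h1)
  refine h.congr_deriv ?_
  field_simp
  ring

private lemma hasDerivAt_T {x : ℝ} (h1 : x + 1 ≠ 0) (h2 : x - 2 ≠ 0) :
    HasDerivAt (fun x : ℝ => (x-1)^2*(x+2) / ((x+1)^2*(x-2)))
      (-12*(x-1)/((x+1)^3*(x-2)^2)) x := by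
  have hnum : HasDerivAt (fun x : ℝ => (x-1)^2*(x+2))
      ((2*(x-1)^1*1)*(x+2)+(x-1)^2*1) x :=
    ((((hasDerivAt_id x).sub_const 1).pow 2).mul ((hasDerivAt_id x).add_const 2))
  have hden : HasDerivAt (fun x : ℝ => (x+1)^2*(x-2))
      ((2*(x+1)^1*1)*(x-2)+(x+1)^2*1) x :=
    ((((hasDerivAt_id x).add_const 1).pow 2).mul ((hasDerivAt_id x).sub_const 2))
  have h := hnum.fun_div hden (mul_ne_zero (pow_ne_zero 2 h1) h2)
  refine h.congr_deriv ?_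
  field_simp
  ring

private lemma hasDerivAt_V {x : ℝ} (h0 : x ≠ 0) (h1 : x - 1 ≠ 0) :
    HasDerivAt (fun x : ℝ => (4*x^4-10*x^3-6*x^2+16*x+8)/(12*x^2*(1-x)))
      (((4*(4*x^3)-10*(3*x^2)-6*(2*x)+16)*(12*x^2*(1-x))
        - (4*x^4-10*x^3-6*x^2+16*x+8)*(12*(2*x)*(1-x)+12*x^2*(-1)))
        /(12*x^2*(1-x))^2) x := by
  have hnum : HasDerivAt (fun x : ℝ => 4*x^4-10*x^3-6*x^2+16*x+8)
      (4*(4*x^3)-10*(3*x^2)-6*(2*x)+16) x := by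
    have := (((((hasDerivAt_pow 4 x).const_mul 4).sub
      ((hasDerivAt_pow 3 x).const_mul 10)).sub
      ((hasDerivAt_pow 2 x).const_mul 6)).add
      ((hasDerivAt_id x).const_mul 16)).add_const 8
    refine this.congr_deriv ?_
    ring
  have hden : HasDerivAt (fun x : ℝ => 12*x^2*(1-x))
      (12*(2*x)*(1-x)+12*x^2*(-1)) x := by
    have := (((hasDerivAt_pow 2 x).const_mul 12).fun_mul
      ((hasDerivAt_id x).const_mul (-1) |>.add_const 1))
    convert this using 1 <;> try rfl
    · ext y; simp only [id]; ring
    · simp only [id]; ring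
  have hne : 12*x^2*(1-x) ≠ 0 := by
    have : (1:ℝ) - x ≠ 0 := fun h => h1 (by linarith [sub_eq_zero.mp h])
    positivity
  exact hnum.fun_div hden hne

end

set_option maxHeartbeats 1600000 in
/-- The degree-3 tetrahedral algebraic Painlevé VI solution. -/
theorem tetrahedral_degree3_solves_PVI :
    ∀ s : ℝ,
      let Y : ℝ → ℝ := fun s => (s-1)*(s+2) / (s*(s+1))
      let T : ℝ → ℝ := fun s => (s-1)^2*(s+2) / ((s+1)^2*(s-2))
      s ≠ 0 → s ≠ -1 → s ≠ 2 → deriv T s ≠ 0 →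
      T s ≠ 0 → T s ≠ 1 → Y s ≠ 0 → Y s ≠ 1 → Y s ≠ T s →
      PVI ((2/3 - 1)^2/2) (-(2/3)^2/2) ((1/3)^2/2) ((1 - (1/3)^2)/2)
        (T s) (Y s) (deriv Y s / deriv T s)
        (deriv (fun x => deriv Y x / deriv T x) s / deriv T s) := by
  intro s Y T hs0 hs1 hs2 hdT hT0 hT1 hY0 hY1 hYT
  have h0 : s ≠ 0 := hs0
  have h1 : s + 1 ≠ 0 := fun h => hs1 (by linarith)
  have h2 : s - 2 ≠ 0 := sub_ne_zero.mpr hs2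
  have hTd : deriv T s = -12*(s-1)/((s+1)^3*(s-2)^2) := (hasDerivAt_T h1 h2).deriv
  have hm1 : s - 1 ≠ 0 := by
    intro h
    apply hdT
    rw [hTd, h]
    simp
  have hp2 : s + 2 ≠ 0 := by
    intro h
    apply hT0
    show (s-1)^2*(s+2)/((s+1)^2*(s-2)) = 0
    rw [h]
    simp
  have hYd : deriv Y s = (4*s+2)/(s*(s+1))^2 := (hasDerivAt_Y h0 h1).deriv
  have hev : (fun x => deriv Y x / deriv T x) =ᶠ[nhds s]
      (fun x : ℝ => (4*x^4-10*x^3-6*x^2+16*x+8)/(12*x^2*(1-x))) := by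
    have hUo : IsOpen {x : ℝ | x ≠ 0 ∧ x ≠ -1 ∧ x ≠ 2 ∧ x ≠ 1} := by
      have : {x : ℝ | x ≠ 0 ∧ x ≠ -1 ∧ x ≠ 2 ∧ x ≠ 1} = (({0, -1, 2, 1} : Set ℝ))ᶜ := by
        ext x
        simp [Set.mem_compl_iff, not_or]
      rw [this]
      exact (Set.Finite.isClosed (Set.toFinite _)).isOpen_compl
    have hU : {x : ℝ | x ≠ 0 ∧ x ≠ -1 ∧ x ≠ 2 ∧ x ≠ 1} ∈ nhds s := by
      refine hUo.mem_nhds ⟨hs0, hs1, hs2, fun h => hm1 (by rw [h]; ring)⟩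
    filter_upwards [hU] with x hx
    obtain ⟨hx0, hx1, hx2, hx3⟩ := hx
    have hx1' : x + 1 ≠ 0 := fun h => hx1 (by linarith)
    have hx2' : x - 2 ≠ 0 := sub_ne_zero.mpr hx2
    have hx3' : x - 1 ≠ 0 := sub_ne_zero.mpr hx3
    have hx1m : (1:ℝ) - x ≠ 0 := fun h => hx3 (by linarith)
    rw [(hasDerivAt_Y hx0 hx1').deriv, (hasDerivAt_T hx1' hx2').deriv]
    field_simp
    ring
  have hWd : deriv (fun x => deriv Y x / deriv T x) s
      = ((4*(4*s^3)-10*(3*s^2)-6*(2*s)+16)*(12*s^2*(1-s))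
        - (4*s^4-10*s^3-6*s^2+16*s+8)*(12*(2*s)*(1-s)+12*s^2*(-1)))
        /(12*s^2*(1-s))^2 := by
    rw [hev.deriv_eq]
    exact (hasDerivAt_V h0 hm1).deriv
  have eY : Y s = (s-1)*(s+2)/(s*(s+1)) := rfl
  have eT : T s = (s-1)^2*(s+2)/((s+1)^2*(s-2)) := rfl
  have eYm1 : Y s - 1 = -2/(s*(s+1)) := by
    rw [eY]; field_simp; ring
  have eTm1 : T s - 1 = 4/((s+1)^2*(s-2)) := by
    rw [eT]; field_simp; ring
  have eYT : Y s - T s = -2*(s-1)*(s+2)/(s*(s+1)^2*(s-2)) := by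
    rw [eY, eT]; field_simp; ring
  have h1s : (1:ℝ) - s ≠ 0 := fun h => hm1 (by linarith)
  unfold PVI
  rw [hYd, hTd, hWd, eYm1, eTm1, eYT, eY, eT]
  field_simp
  ring
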